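/- Let $0 \le x < y$, $\alpha \in (0,1)$, $n = \lfloor \alpha \rfloor + 1 = 1$, $q > 1$, $p = q/(q-1)$, $m \in (0,1]$, and let $f$ have continuous $(n+1)$-st derivative such that $|f^{(n+1)}|^q$ is $m$-convex on $[0, y/m]$. Then $\left|\frac{1}{y-x} f^{(n)}(y) - \frac{(-1)^n \Gamma(n-\alpha+1)}{(y-x)^{n-\alpha+1}}({}^C D_{y^-}^{\alpha} f)(x)\right| \le \left(\frac{1}{n-\alpha+1}\right)^{1/p}\left(|f^{(n+1)}(x)|^q\, B(2, n-\alpha+1) + m |f^{(n+1)}(y/m)|^q\, \frac{1}{2(n-\alpha)+1}\right)^{1/q}$. -/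

import Mathlib

open intervalIntegral MeasureTheory Set

noncomputable def caputoLeft (α : ℝ) (n : ℕ) (f : ℝ → ℝ) (a x : ℝ) : ℝ :=
  (1 / Real.Gamma ((n:ℝ) - α)) * ∫ t in a..x, (x - t) ^ ((n:ℝ) - α - 1) * iteratedDeriv n f t

noncomputable def caputoRight (α : ℝ) (n : ℕ) (f : ℝ → ℝ) (b x : ℝ) : ℝ :=
  ((-1:ℝ)^n / Real.Gamma ((n:ℝ) - α)) * ∫ t in x..b, (t - x) ^ ((n:ℝ) - α - 1) * iteratedDeriv n f t

lemma rpow_integrable_left (b : ℝ) (hb : -1 < b) :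
    IntervalIntegrable (fun t : ℝ => (1 - t) ^ b) volume 0 1 := by
  have h := (intervalIntegrable_rpow' (a := 0) (b := 1) hb).comp_sub_left 1
  simpa using h.symm

lemma caputo_ident (f : ℝ → ℝ) (x y α : ℝ)
    (hxy : x < y) (hα : α ∈ Set.Ioo (0:ℝ) 1) (hf : ContDiff ℝ 2 f) :
    (1 / (y - x)) * deriv f y
        - ((-1:ℝ)^1 * Real.Gamma (1 - α + 1) / (y - x) ^ (1 - α + 1)) * caputoRight α 1 f y x
      = ∫ t in (0:ℝ)..1, (1 - t) ^ (1 - α) * iteratedDeriv 2 f (y - t * (y - x)) := by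
  obtain ⟨hα0, hα1⟩ := hα
  set b : ℝ := 1 - α with hbdef
  set c : ℝ := y - x with hcdef
  have hb0 : 0 < b := by simp [hbdef]; linarith
  have hb1 : b < 1 := by simp [hbdef]; linarith
  have hc : 0 < c := by simp [hcdef]; linarith
  have hΓpos : 0 < Real.Gamma b := Real.Gamma_pos_of_pos hb0
  have hΓ2 : Real.Gamma (b + 1) = b * Real.Gamma b := by
    rw [Real.Gamma_add_one hb0.ne']
  -- differentiability facts
  have hf' : Differentiable ℝ f ∧ ContDiff ℝ 1 (deriv f) := by
    rw [show (2:WithTop ℕ∞) = 1 + 1 by norm_num, contDiff_succ_iff_deriv] at hf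
    exact ⟨hf.1, hf.2.2⟩
  have hdf : Differentiable ℝ (deriv f) := hf'.2.differentiable one_ne_zero
  have hcontdf : Continuous (deriv f) := hdf.continuous
  have hcontddf : Continuous (deriv (deriv f)) := hf'.2.continuous_deriv le_rfl
  have hit2 : iteratedDeriv 2 f = deriv (deriv f) := by
    rw [show (2:ℕ) = 1 + 1 from rfl, iteratedDeriv_succ, iteratedDeriv_one]
  -- FTC / integration by parts
  set H : ℝ → ℝ := fun t => (1 - t) ^ b * deriv f (y - t * c) with hHdef
  set G1 : ℝ → ℝ := fun t => (1 - t) ^ (b - 1) * (-b * deriv f (y - t * c)) with hG1def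
  set G2 : ℝ → ℝ := fun t => (1 - t) ^ b * (-c * deriv (deriv f) (y - t * c)) with hG2def
  have hcontH : Continuous H := by
    exact ((continuous_const.sub continuous_id).rpow_const (fun t => Or.inr hb0.le)).mul
      (hcontdf.comp (continuous_const.sub (continuous_id.mul continuous_const)))
  have hderivH : ∀ t ∈ Ioo (0:ℝ) 1, HasDerivAt H (G1 t + G2 t) t := by
    intro t ht
    have h1 : HasDerivAt (fun s : ℝ => (1 - s) ^ b) ((b * (1 - t) ^ (b - 1)) * (-1)) t := by
      have hbase : HasDerivAt (fun s : ℝ => 1 - s) (-1) t := by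
        simpa using (hasDerivAt_id t).const_sub 1
      exact (Real.hasDerivAt_rpow_const (p := b) (Or.inl (by nlinarith [ht.2]))).comp t hbase
    have h2 : HasDerivAt (fun s : ℝ => deriv f (y - s * c)) (deriv (deriv f) (y - t * c) * (-c)) t := by
      have hbase : HasDerivAt (fun s : ℝ => y - s * c) (-c) t := by
        simpa using ((hasDerivAt_id t).mul_const c).const_sub y
      exact ((hdf (y - t * c)).hasDerivAt).comp t hbase
    have := h1.mul h2
    refine this.congr_deriv ?_
    simp only [hG1def, hG2def]
    ring
  have hintG1 : IntervalIntegrable G1 volume 0 1 := by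
    apply (rpow_integrable_left (b - 1) (by linarith)).mul_continuousOn
    exact (continuous_const.mul (hcontdf.comp
      (continuous_const.sub (continuous_id.mul continuous_const)))).continuousOn
  have hintG2 : IntervalIntegrable G2 volume 0 1 := by
    apply Continuous.intervalIntegrable
    exact ((continuous_const.sub continuous_id).rpow_const (fun t => Or.inr hb0.le)).mul
      (continuous_const.mul (hcontddf.comp
        (continuous_const.sub (continuous_id.mul continuous_const))))
  have hftc : ∫ t in (0:ℝ)..1, (G1 t + G2 t) = H 1 - H 0 := by
    apply integral_eq_sub_of_hasDeriv_right_of_le zero_le_one hcontH.continuousOn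
      (fun t ht => (hderivH t ht).hasDerivWithinAt)
    exact hintG1.add hintG2
  have hH1 : H 1 = 0 := by
    simp [hHdef, Real.zero_rpow hb0.ne']
  have hH0 : H 0 = deriv f y := by
    simp [hHdef, Real.one_rpow]
  -- substitution for the G1 integral
  set J : ℝ := ∫ s in x..y, (s - x) ^ (b - 1) * deriv f s with hJdef
  have hsub : ∫ t in (0:ℝ)..1, (1 - t) ^ (b - 1) * deriv f (y - t * c)
      = c ^ (1 - b) * (J / c) := by
    have hcomp : ∫ t in (0:ℝ)..1, (fun s => (s - x) ^ (b - 1) * deriv f s) (-c * t + y)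
        = (-c)⁻¹ • ∫ s in (-c * 0 + y)..(-c * 1 + y), (s - x) ^ (b - 1) * deriv f s := by
      exact integral_comp_mul_add (fun s => (s - x) ^ (b - 1) * deriv f s) (neg_ne_zero.mpr hc.ne') y
    have heq : EqOn (fun t : ℝ => (1 - t) ^ (b - 1) * deriv f (y - t * c))
        (fun t : ℝ => c ^ (1 - b) * ((fun s => (s - x) ^ (b - 1) * deriv f s) (-c * t + y)))
        (Set.uIcc (0:ℝ) 1) := by
      intro t ht
      rw [Set.uIcc_of_le zero_le_one] at ht
      have h1t : 0 ≤ 1 - t := by linarith [ht.2]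
      show (1 - t) ^ (b - 1) * deriv f (y - t * c)
          = c ^ (1 - b) * ((-c * t + y - x) ^ (b - 1) * deriv f (-c * t + y))
      rw [show -c * t + y - x = (1 - t) * c by rw [hcdef]; ring,
        show -c * t + y = y - t * c by ring, Real.mul_rpow h1t hc.le]
      have hone : c ^ (1 - b) * c ^ (b - 1) = 1 := by
        rw [← Real.rpow_add hc]; norm_num
      linear_combination (-((1 - t) ^ (b - 1) * deriv f (y - t * c))) * hone
    rw [intervalIntegral.integral_congr heq, intervalIntegral.integral_const_mul, hcomp,
      show -c * 0 + y = y by ring, show -c * 1 + y = x by rw [hcdef]; ring,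
      intervalIntegral.integral_symm x y, ← hJdef, smul_eq_mul]
    field_simp
  -- split the FTC identity
  set K : ℝ := ∫ t in (0:ℝ)..1, (1 - t) ^ b * deriv (deriv f) (y - t * c) with hKdef
  have hIG1 : ∫ t in (0:ℝ)..1, G1 t = -b * (c ^ (1 - b) * (J / c)) := by
    have h : ∀ t : ℝ, G1 t = -b * ((1 - t) ^ (b - 1) * deriv f (y - t * c)) := by
      intro t; simp only [hG1def]; ring
    simp_rw [h]
    rw [intervalIntegral.integral_const_mul, hsub]
  have hIG2 : ∫ t in (0:ℝ)..1, G2 t = -c * K := by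
    have h : ∀ t : ℝ, G2 t = -c * ((1 - t) ^ b * deriv (deriv f) (y - t * c)) := by
      intro t; simp only [hG2def]; ring
    simp_rw [h]
    rw [intervalIntegral.integral_const_mul, hKdef]
  rw [intervalIntegral.integral_add hintG1 hintG2, hIG1, hIG2, hH1, hH0] at hftc
  -- caputo in terms of J
  have hΓne : Real.Gamma b ≠ 0 := hΓpos.ne'
  have hcap : caputoRight α 1 f y x = -(J / Real.Gamma b) := by
    simp only [caputoRight, pow_one, Nat.cast_one, iteratedDeriv_one]
    rw [show (1:ℝ) - α - 1 = b - 1 from by rw [hbdef], show (1:ℝ) - α = b from hbdef.symm,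
      ← hJdef]
    ring
  have hKtarget : ∫ t in (0:ℝ)..1, (1 - t) ^ b * iteratedDeriv 2 f (y - t * (y - x)) = K := by
    rw [hKdef, hit2, ← hcdef]
  rw [hKtarget, hcap, hΓ2, pow_one]
  have hcb1 : (0:ℝ) < c ^ (b+1) := Real.rpow_pos_of_pos hc _
  have hcc : c ^ (1 - b) * c ^ (b + 1) = c * c := by
    rw [← Real.rpow_add hc, show (1 - b) + (b + 1) = 2 by ring]
    rw [show (2:ℝ) = ((2:ℕ):ℝ) by norm_num, Real.rpow_natCast]
    ring
  have hcb : (0:ℝ) < c ^ (1 - b) := Real.rpow_pos_of_pos hc _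
  have h2 : b * (c ^ (1 - b) * J) + c * (c * K) = c * deriv f y := by
    field_simp at hftc
    linarith
  have hK : K = (c * deriv f y - b * (c ^ (1 - b) * J)) / (c * c) := by
    field_simp; linarith
  rw [hK, ← hcc]
  field_simp
  linear_combination (deriv f y) * hcc


noncomputable def betaFun (u v : ℝ) : ℝ := ∫ t in (0:ℝ)..1, t ^ (u - 1) * (1 - t) ^ (v - 1)

lemma integral_one_sub_rpow (r : ℝ) (hr : -1 < r) :
    ∫ t in (0:ℝ)..1, (1 - t) ^ r = 1 / (r + 1) := by
  rw [intervalIntegral.integral_comp_sub_left (fun s => s ^ r) 1]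
  norm_num
  rw [integral_rpow (Or.inl hr)]
  rw [Real.one_rpow, Real.zero_rpow (by linarith)]
  field_simp
  norm_num

theorem caputo_right_mconvex_power_mean (f : ℝ → ℝ) (x y α m p q : ℝ)
    (hx : 0 ≤ x) (hxy : x < y) (hα : α ∈ Set.Ioo (0:ℝ) 1) (hm : m ∈ Set.Ioc (0:ℝ) 1)
    (hq : 1 < q) (hp : p = q / (q - 1)) (hf : ContDiff ℝ 2 f)
    (hconv : ∀ u ∈ Set.Icc (0:ℝ) (y/m), ∀ v ∈ Set.Icc (0:ℝ) (y/m), ∀ t ∈ Set.Icc (0:ℝ) 1,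
      |iteratedDeriv 2 f (t*u + m*(1-t)*v)| ^ q
        ≤ t * |iteratedDeriv 2 f u| ^ q + m * (1-t) * |iteratedDeriv 2 f v| ^ q) :
    |(1 / (y - x)) * deriv f y
        - ((-1:ℝ)^1 * Real.Gamma (1 - α + 1) / (y - x) ^ (1 - α + 1)) * caputoRight α 1 f y x|
      ≤ (1 / (1 - α + 1)) ^ (1/p)
          * (|iteratedDeriv 2 f x| ^ q * betaFun 2 (1 - α + 1)
            + m * |iteratedDeriv 2 f (y/m)| ^ q * (1 / (2*(1 - α) + 1))) ^ (1/q) := by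
  obtain ⟨hα0, hα1⟩ := hα
  obtain ⟨hm0, hm1⟩ := hm
  rw [caputo_ident f x y α hxy ⟨hα0, hα1⟩ hf]
  set b : ℝ := 1 - α with hbdef
  have hb0 : 0 < b := by rw [hbdef]; linarith
  have hb1 : b < 1 := by rw [hbdef]; linarith
  have hy : 0 < y := lt_of_le_of_lt hx hxy
  -- conjugate exponents
  have hq0 : 0 < q := by linarith
  have hpq : p.HolderConjugate q := by
    have h := Real.HolderConjugate.conjExponent hq
    rw [Real.conjExponent, ← hp] at h
    exact h.symm
  have hp1 : 1 < p := hpq.lt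
  have hp0 : 0 < p := hpq.pos
  set F : ℝ → ℝ := fun t => iteratedDeriv 2 f (y - t * (y - x)) with hFdef
  have hcontF : Continuous F :=
    (hf.continuous_iteratedDeriv 2 le_rfl).comp
      (continuous_const.sub (continuous_id.mul continuous_const))
  set A : ℝ := |iteratedDeriv 2 f x| ^ q with hAdef
  set B : ℝ := |iteratedDeriv 2 f (y/m)| ^ q with hBdef
  have hA0 : 0 ≤ A := Real.rpow_nonneg (abs_nonneg _) q
  have hB0 : 0 ≤ B := Real.rpow_nonneg (abs_nonneg _) q
  -- Step 1 : pull abs inside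
  have step1 : |∫ t in (0:ℝ)..1, (1 - t) ^ b * F t| ≤ ∫ t in (0:ℝ)..1, (1 - t) ^ b * |F t| := by
    refine (intervalIntegral.abs_integral_le_integral_abs zero_le_one).trans_eq ?_
    apply intervalIntegral.integral_congr
    intro t ht
    rw [Set.uIcc_of_le zero_le_one] at ht
    have h1t : 0 ≤ 1 - t := by linarith [ht.2]
    show |(1 - t) ^ b * F t| = (1 - t) ^ b * |F t|
    rw [abs_mul, abs_of_nonneg (Real.rpow_nonneg h1t b)]
  -- Step 2 : Hölder
  set μ : MeasureTheory.Measure ℝ := MeasureTheory.volume.restrict (Set.Ioc 0 1) with hμ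
  haveI : MeasureTheory.IsFiniteMeasure μ := by
    constructor
    rw [hμ, MeasureTheory.Measure.restrict_apply MeasurableSet.univ]
    simp
  set u : ℝ → ℝ := fun t => (1 - t) ^ (b/p) with hudef
  set v : ℝ → ℝ := fun t => (1 - t) ^ (b/q) * |F t| with hvdef
  have hcu : Continuous u :=
    (continuous_const.sub continuous_id).rpow_const (fun t => Or.inr (by positivity))
  have hcv : Continuous v :=
    ((continuous_const.sub continuous_id).rpow_const (fun t => Or.inr (by positivity))).mul
      hcontF.abs
  have hu0 : 0 ≤ᵐ[μ] u := by
    rw [hμ]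
    refine (MeasureTheory.ae_restrict_iff' measurableSet_Ioc).2 (Filter.Eventually.of_forall ?_)
    intro t ht
    exact Real.rpow_nonneg (by linarith [ht.2]) _
  have hv0 : 0 ≤ᵐ[μ] v := by
    rw [hμ]
    refine (MeasureTheory.ae_restrict_iff' measurableSet_Ioc).2 (Filter.Eventually.of_forall ?_)
    intro t ht
    exact mul_nonneg (Real.rpow_nonneg (by linarith [ht.2]) _) (abs_nonneg _)
  have huLp : MeasureTheory.MemLp u (ENNReal.ofReal p) μ := by
    refine MeasureTheory.MemLp.of_bound hcu.aestronglyMeasurable 1 ?_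
    rw [hμ]
    refine (MeasureTheory.ae_restrict_iff' measurableSet_Ioc).2 (Filter.Eventually.of_forall ?_)
    intro t ht
    rw [Real.norm_eq_abs, abs_of_nonneg (Real.rpow_nonneg (by linarith [ht.2]) _)]
    exact Real.rpow_le_one (by linarith [ht.2]) (by linarith [ht.1]) (by positivity)
  have hvLq : MeasureTheory.MemLp v (ENNReal.ofReal q) μ := by
    obtain ⟨C, hC⟩ := (isCompact_Icc (a := (0:ℝ)) (b := 1)).exists_bound_of_continuousOn
      hcv.continuousOn
    refine MeasureTheory.MemLp.of_bound hcv.aestronglyMeasurable C ?_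
    rw [hμ]
    refine (MeasureTheory.ae_restrict_iff' measurableSet_Ioc).2 (Filter.Eventually.of_forall ?_)
    intro t ht
    exact hC t (Set.Ioc_subset_Icc_self ht)
  have holder := MeasureTheory.integral_mul_le_Lp_mul_Lq_of_nonneg hpq hu0 hv0 huLp hvLq
  have hsum : b/p + b/q = b := by
    have h1 : p⁻¹ + q⁻¹ = 1 := hpq.inv_add_inv_eq_one
    field_simp
    field_simp at h1
    nlinarith [h1]
  have huv : ∫ a, u a * v a ∂μ = ∫ t in (0:ℝ)..1, (1 - t) ^ b * |F t| := by
    rw [intervalIntegral.integral_of_le zero_le_one, hμ]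
    apply MeasureTheory.setIntegral_congr_fun measurableSet_Ioc
    intro t ht
    have h1t : 0 ≤ 1 - t := by linarith [ht.2]
    show u t * v t = (1 - t) ^ b * |F t|
    rw [hudef, hvdef]
    show (1 - t) ^ (b/p) * ((1 - t) ^ (b/q) * |F t|) = (1 - t) ^ b * |F t|
    rw [← mul_assoc, ← Real.rpow_add' h1t (by rw [hsum]; exact hb0.ne'), hsum]
  have hup : ∫ a, u a ^ p ∂μ = 1 / (b + 1) := by
    have : ∫ a, u a ^ p ∂μ = ∫ t in (0:ℝ)..1, (1 - t) ^ b := by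
      rw [intervalIntegral.integral_of_le zero_le_one, hμ]
      apply MeasureTheory.setIntegral_congr_fun measurableSet_Ioc
      intro t ht
      have h1t : 0 ≤ 1 - t := by linarith [ht.2]
      show u t ^ p = (1 - t) ^ b
      rw [hudef]
      show ((1 - t) ^ (b/p)) ^ p = (1 - t) ^ b
      rw [← Real.rpow_mul h1t, div_mul_cancel₀ _ hp0.ne']
    rw [this, integral_one_sub_rpow b (by linarith)]
  have hvq : ∫ a, v a ^ q ∂μ = ∫ t in (0:ℝ)..1, (1 - t) ^ b * |F t| ^ q := by
    rw [intervalIntegral.integral_of_le zero_le_one, hμ]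
    apply MeasureTheory.setIntegral_congr_fun measurableSet_Ioc
    intro t ht
    have h1t : 0 ≤ 1 - t := by linarith [ht.2]
    show v t ^ q = (1 - t) ^ b * |F t| ^ q
    rw [hvdef]
    show ((1 - t) ^ (b/q) * |F t|) ^ q = (1 - t) ^ b * |F t| ^ q
    rw [Real.mul_rpow (Real.rpow_nonneg h1t _) (abs_nonneg _), ← Real.rpow_mul h1t,
      div_mul_cancel₀ _ hq0.ne']
  -- Step 3 : m-convexity bound
  have hbeta : betaFun 2 (b + 1) = ∫ t in (0:ℝ)..1, t * (1 - t) ^ b := by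
    rw [betaFun]
    apply intervalIntegral.integral_congr
    intro t ht
    norm_num [Real.rpow_one]
  have hmemx : x ∈ Set.Icc (0:ℝ) (y/m) := by
    constructor
    · exact hx
    · have : y ≤ y / m := by
        rw [le_div_iff₀ hm0]
        nlinarith
      linarith
  have hmemym : y/m ∈ Set.Icc (0:ℝ) (y/m) := by
    constructor
    · positivity
    · exact le_refl _
  have step3 : ∫ t in (0:ℝ)..1, (1 - t) ^ b * |F t| ^ q
      ≤ A * betaFun 2 (b + 1) + m * B * (1 / (2*b + 1)) := by
    have hint1 : IntervalIntegrable (fun t => (1 - t) ^ b * |F t| ^ q) MeasureTheory.volume 0 1 := by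
      apply Continuous.intervalIntegrable
      exact ((continuous_const.sub continuous_id).rpow_const (fun t => Or.inr hb0.le)).mul
        (hcontF.abs.rpow_const (fun t => Or.inr hq0.le))
    have hint2 : IntervalIntegrable (fun t => (1 - t) ^ b * (t * A + m * (1 - t) * B))
        MeasureTheory.volume 0 1 := by
      apply Continuous.intervalIntegrable
      exact ((continuous_const.sub continuous_id).rpow_const (fun t => Or.inr hb0.le)).mul
        ((continuous_id.mul continuous_const).add ((continuous_const.mul (continuous_const.sub continuous_id)).mul continuous_const))
    have hmono : ∫ t in (0:ℝ)..1, (1 - t) ^ b * |F t| ^ q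
        ≤ ∫ t in (0:ℝ)..1, (1 - t) ^ b * (t * A + m * (1 - t) * B) := by
      apply intervalIntegral.integral_mono_on zero_le_one hint1 hint2
      intro t ht
      have h1t : 0 ≤ 1 - t := by linarith [ht.2]
      apply mul_le_mul_of_nonneg_left _ (Real.rpow_nonneg h1t b)
      have h := hconv x hmemx (y/m) hmemym t ht
      rw [show t*x + m*(1-t)*(y/m) = y - t * (y - x) from by field_simp; ring] at h
      exact h
    refine hmono.trans ?_
    have hsplit : ∫ t in (0:ℝ)..1, (1 - t) ^ b * (t * A + m * (1 - t) * B)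
        = A * (∫ t in (0:ℝ)..1, t * (1 - t) ^ b)
          + m * B * (∫ t in (0:ℝ)..1, (1 - t) ^ (b+1)) := by
      rw [← intervalIntegral.integral_const_mul, ← intervalIntegral.integral_const_mul,
        ← intervalIntegral.integral_add]
      · apply intervalIntegral.integral_congr
        intro t ht
        rw [Set.uIcc_of_le zero_le_one] at ht
        have h1t : 0 ≤ 1 - t := by linarith [ht.2]
        show (1 - t) ^ b * (t * A + m * (1 - t) * B)
            = A * (t * (1 - t) ^ b) + m * B * (1 - t) ^ (b + 1)
        rw [Real.rpow_add' h1t (by linarith), Real.rpow_one]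
        ring
      · apply Continuous.intervalIntegrable
        exact continuous_const.mul (continuous_id.mul
          ((continuous_const.sub continuous_id).rpow_const (fun t => Or.inr hb0.le)))
      · apply Continuous.intervalIntegrable
        exact continuous_const.mul
          ((continuous_const.sub continuous_id).rpow_const (fun t => Or.inr (by linarith)))
    rw [hsplit, ← hbeta, integral_one_sub_rpow (b+1) (by linarith)]
    have hle : 1 / (b + 1 + 1) ≤ 1 / (2*b + 1) := by
      apply one_div_le_one_div_of_le
      · linarith
      · linarith
    have : m * B * (1 / (b + 1 + 1)) ≤ m * B * (1 / (2*b + 1)) := by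
      apply mul_le_mul_of_nonneg_left hle (by positivity)
    linarith
  -- assemble
  have key : ∫ t in (0:ℝ)..1, (1 - t) ^ b * |F t|
      ≤ (1 / (b + 1)) ^ (1/p) * (A * betaFun 2 (b + 1) + m * B * (1 / (2*b + 1))) ^ (1/q) := by
    rw [← huv]
    refine holder.trans ?_
    rw [hup, hvq]
    apply mul_le_mul_of_nonneg_left _ (Real.rpow_nonneg (by positivity) _)
    apply Real.rpow_le_rpow _ step3 (by positivity)
    apply intervalIntegral.integral_nonneg zero_le_one
    intro t ht
    exact mul_nonneg (Real.rpow_nonneg (by linarith [ht.2]) _) (Real.rpow_nonneg (abs_nonneg _) _)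
  calc |∫ t in (0:ℝ)..1, (1 - t) ^ b * F t|
      ≤ ∫ t in (0:ℝ)..1, (1 - t) ^ b * |F t| := step1
    _ ≤ (1 / (b + 1)) ^ (1/p) * (A * betaFun 2 (b + 1) + m * B * (1 / (2*b + 1))) ^ (1/q) := key
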